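/- arXiv:1504.00423 — 3 statements merged into one kernel-verified Lean document; each statement's English description precedes it below -/
import Mathlib

section
/- Assume W ∈ C³(ℝ²;ℝ) satisfies W ≥ 0 with W(p) = 0 iff p ∈ {p₋, p₊} (W1), and there exist R₀, c₀ > 0 such that ∇W(p)·p ≥ c₀|p|² for all |p| ≥ R₀ (W3). Then there exists a constant K > 0, depending only on W, such that every heteroclinic connection V : ℝ → ℝ² (i.e., every solution of V'' = ∇W(V) with V(x) → p± as x → ±∞) satisfies ‖V‖_{L^∞(ℝ)} ≤ K. -/
open Set Filter MeasureTheory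
open scoped Topology

noncomputable section

/-- Euclidean norm on `ℝ × ℝ`. -/
def enorm2 (v : ℝ × ℝ) : ℝ := Real.sqrt (v.1 ^ 2 + v.2 ^ 2)

/-- Euclidean dot product on `ℝ × ℝ`. -/
def dot2 (v w : ℝ × ℝ) : ℝ := v.1 * w.1 + v.2 * w.2

/-- Gradient of `W : ℝ² → ℝ` (via the Fréchet derivative). -/
def gradW (W : ℝ × ℝ → ℝ) (p : ℝ × ℝ) : ℝ × ℝ :=
  (fderiv ℝ W p (1, 0), fderiv ℝ W p (0, 1))

lemma enorm2_nonneg' (v : ℝ × ℝ) : 0 ≤ enorm2 v := Real.sqrt_nonneg _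

lemma enorm2_sq' (v : ℝ × ℝ) : enorm2 v ^ 2 = v.1 ^ 2 + v.2 ^ 2 :=
  Real.sq_sqrt (by positivity)

/-- A priori `L^∞` bound for heteroclinics: if `W ∈ C³(ℝ²)` satisfies
(W1) `W ≥ 0` with zeros exactly `{p₋, p₊}` and (W3) `∇W(p)·p ≥ c₀|p|²` for `|p| ≥ R₀`,
then there is `K > 0`, depending only on `W`, such that every solution `V` of
`V'' = ∇W(V)` with `V(±∞) = p±` satisfies `‖V‖_{L^∞(ℝ)} ≤ K`. -/
theorem heteroclinic_apriori_bound (W : ℝ × ℝ → ℝ) (pp pm : ℝ × ℝ) (hne : pp ≠ pm)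
    (hW : ContDiff ℝ 3 W) (hWnn : ∀ p, 0 ≤ W p)
    (hzeros : ∀ p, W p = 0 ↔ p = pp ∨ p = pm)
    (R0 c0 : ℝ) (hR0 : 0 < R0) (hc0 : 0 < c0)
    (hW3 : ∀ p : ℝ × ℝ, R0 ≤ enorm2 p → c0 * enorm2 p ^ 2 ≤ dot2 (gradW W p) p) :
    ∃ K > (0:ℝ), ∀ V V' : ℝ → ℝ × ℝ,
      (∀ x, HasDerivAt V (V' x) x) →
      (∀ x, HasDerivAt V' (gradW W (V x)) x) →
      Tendsto V atTop (𝓝 pp) → Tendsto V atBot (𝓝 pm) →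
      ∀ x : ℝ, enorm2 (V x) ≤ K := by
  set M : ℝ := max (max R0 (enorm2 pp)) (enorm2 pm) with hM
  have hMR : R0 ≤ M := le_trans (le_max_left _ _) (le_max_left _ _)
  have hMpp : enorm2 pp ≤ M := le_trans (le_max_right _ _) (le_max_left _ _)
  have hMpm : enorm2 pm ≤ M := le_max_right _ _
  refine ⟨M + 1, by positivity, ?_⟩
  intro V V' hV hV' hTop hBot x
  by_contra hcon
  push_neg at hcon
  set K : ℝ := M + 1 with hK
  have hK0 : 0 < K := by positivity
  -- the squared norm along the trajectory
  set f : ℝ → ℝ := fun y => (V y).1 ^ 2 + (V y).2 ^ 2 with hf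
  -- first derivative of f
  set G : ℝ → ℝ := fun y => 2 * ((V y).1 * (V' y).1 + (V y).2 * (V' y).2) with hG
  have hfd : ∀ y, HasDerivAt f (G y) y := by
    intro y
    have ha : HasDerivAt (fun t => (V t).1) (V' y).1 y := (hV y).fst
    have hb : HasDerivAt (fun t => (V t).2) (V' y).2 y := (hV y).snd
    have h1 : HasDerivAt (fun t => (V t).1 ^ 2 + (V t).2 ^ 2) _ y := (ha.pow 2).add (hb.pow 2)
    convert h1 using 1
    simp only [hG]; ring
  have hGd : ∀ y, HasDerivAt G
      (2 * ((V' y).1 ^ 2 + (V' y).2 ^ 2 + dot2 (gradW W (V y)) (V y))) y := by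
    intro y
    have ha : HasDerivAt (fun t => (V t).1) (V' y).1 y := (hV y).fst
    have hb : HasDerivAt (fun t => (V t).2) (V' y).2 y := (hV y).snd
    have ha' : HasDerivAt (fun t => (V' t).1) (gradW W (V y)).1 y := (hV' y).fst
    have hb' : HasDerivAt (fun t => (V' t).2) (gradW W (V y)).2 y := (hV' y).snd
    have h1 : HasDerivAt (fun t => 2 * ((V t).1 * (V' t).1 + (V t).2 * (V' t).2)) _ y :=
      ((ha.mul ha').add (hb.mul hb')).const_mul 2
    convert h1 using 1
    simp only [dot2]; ring
  have hfc : Continuous f := by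
    apply continuous_iff_continuousAt.mpr
    exact fun y => (hfd y).continuousAt
  -- the point exceeding K
  have hx : K < enorm2 (V x) := hcon
  have hfx : K ^ 2 < f x := by
    have := enorm2_sq' (V x)
    have h2 : K ^ 2 < enorm2 (V x) ^ 2 := by
      apply pow_lt_pow_left₀ hx (le_of_lt hK0)
      norm_num
    rw [this] at h2; exact h2
  -- limits of f at ±∞
  have hlim : ∀ (p : ℝ × ℝ) (l : Filter ℝ), Tendsto V l (𝓝 p) → enorm2 p ≤ M →
      ∀ᶠ y in l, f y < f x := by
    intro p l hl hp
    have hcont : Continuous fun q : ℝ × ℝ => q.1 ^ 2 + q.2 ^ 2 := by continuity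
    have h1 : Tendsto f l (𝓝 (p.1 ^ 2 + p.2 ^ 2)) := (hcont.tendsto p).comp hl
    have h2 : p.1 ^ 2 + p.2 ^ 2 < f x := by
      have h3 : p.1 ^ 2 + p.2 ^ 2 = enorm2 p ^ 2 := (enorm2_sq' p).symm
      have h4 : enorm2 p ^ 2 ≤ M ^ 2 := by
        apply pow_le_pow_left₀ (enorm2_nonneg' p) hp
      have h5 : M ^ 2 < K ^ 2 := by
        have hM0 : 0 ≤ M := le_trans hR0.le hMR
        apply pow_lt_pow_left₀ (by simp [hK]) hM0
        norm_num
      linarith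
    exact h1.eventually_lt_const h2
  obtain ⟨B, hB⟩ := eventually_atTop.mp (hlim pp atTop hTop hMpp)
  obtain ⟨A, hA⟩ := eventually_atBot.mp (hlim pm atBot hBot hMpm)
  set A' : ℝ := min A x with hA'
  set B' : ℝ := max B x with hB'
  have hxI : x ∈ Icc A' B' := ⟨min_le_right _ _, le_max_right _ _⟩
  obtain ⟨z, hzI, hz⟩ := isCompact_Icc.exists_isMaxOn ⟨x, hxI⟩ (hfc.continuousOn (s := Icc A' B'))
  -- z is a global max
  have hglob : ∀ y, f y ≤ f z := by
    intro y
    rcases le_or_gt y B' with hyB | hyB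
    · rcases le_or_gt A' y with hyA | hyA
      · exact hz ⟨hyA, hyB⟩
      · have : f y < f x := hA y (le_trans hyA.le (min_le_left _ _))
        exact le_trans this.le (hz hxI)
    · have : f y < f x := hB y (le_trans (le_max_left _ _) hyB.le)
      exact le_trans this.le (hz hxI)
  have hlocmax : IsLocalMax f z := by
    have hmax : IsMaxOn f univ z := fun y _ => hglob y
    exact hmax.isLocalMax univ_mem
  -- f z is large
  have hfz : K ^ 2 < f z := lt_of_lt_of_le hfx (hglob x)
  have hnz : K ≤ enorm2 (V z) := by
    have : K ^ 2 ≤ enorm2 (V z) ^ 2 := by rw [enorm2_sq']; exact hfz.le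
    by_contra hcon2
    push_neg at hcon2
    have := pow_lt_pow_left₀ hcon2 (enorm2_nonneg' _) (n := 2) (by norm_num)
    linarith
  have hRz : R0 ≤ enorm2 (V z) := le_trans (by simp [hK]; linarith) hnz
  -- second derivative positive at z
  have hD : 0 < 2 * ((V' z).1 ^ 2 + (V' z).2 ^ 2 + dot2 (gradW W (V z)) (V z)) := by
    have h1 := hW3 (V z) hRz
    have h2 : 0 < enorm2 (V z) ^ 2 := pow_pos (lt_of_lt_of_le hK0 hnz) 2
    nlinarith [sq_nonneg (V' z).1, sq_nonneg (V' z).2]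
  -- G z = 0
  have hGz : G z = 0 := hlocmax.hasDerivAt_eq_zero (hfd z)
  -- G is positive just to the right of z
  have hslope := hasDerivAt_iff_tendsto_slope.mp (hGd z)
  have hev : ∀ᶠ y in 𝓝[≠] z, 0 < slope G z y :=
    hslope.eventually (eventually_gt_nhds hD)
  have hev' : ∀ᶠ y in 𝓝[>] z, 0 < slope G z y :=
    hev.filter_mono (nhdsWithin_mono _ (fun y hy => ne_of_gt hy))
  obtain ⟨b, hbz, hb⟩ := mem_nhdsGT_iff_exists_Ioo_subset.mp hev'
  have hGpos : ∀ y ∈ Ioo z b, 0 < G y := by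
    intro y hy
    have hs := hb hy
    simp only [mem_setOf_eq, slope_def_field] at hs
    have h1 : 0 < y - z := sub_pos.mpr hy.1
    rw [hGz, sub_zero] at hs
    rcases div_pos_iff.mp hs with ⟨h, _⟩ | ⟨_, h⟩
    · exact h
    · linarith
  -- f strictly increasing on [z, b], contradiction with max at z
  have hmono : StrictMonoOn f (Icc z b) := by
    apply strictMonoOn_of_deriv_pos (convex_Icc z b) (hfc.continuousOn)
    intro y hy
    rw [interior_Icc] at hy
    rw [(hfd y).deriv]
    exact hGpos y hy
  have hbz' : z < b := hbz
  have hmid : z < (z + b) / 2 ∧ (z + b) / 2 < b := by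
    constructor <;> linarith
  have : f z < f ((z + b) / 2) :=
    hmono ⟨le_refl z, hbz'.le⟩ ⟨hmid.1.le, hmid.2.le⟩ hmid.1
  exact absurd (hglob ((z + b) / 2)) (not_le.mpr this)
end
end

section
/- Suppose that in Euclidean coordinates adapted to the eigenvectors of the Hessian at the well p₊, W(p) = λ₁²(p₁ − p₊⁽¹⁾)² + λ₂²(p₂ − p₊⁽²⁾)² exactly for |p − p₊| < r with r > 0 and λ₁, λ₂ > 0. If U : ℝ → ℝ² is a heteroclinic traveling wave, i.e., a solution of −ν J U' = U'' − ∇W(U) with U(x) → p₊ as x → +∞ (so that U remains in the ball B_r(p₊) on some interval [x₀, ∞)), then ν² ≤ 2(λ₁ + λ₂)². Consequently, if both wells are exactly quadratic the wave speed satisfies ν² ≤ 2(λ₁ + λ₂)² with the eigenvalues taken at either well. -/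
open Set Filter MeasureTheory
open scoped Topology

noncomputable section

/-- The symplectic matrix `J` with rows `(0,1)` and `(-1,0)`, acting on `ℝ²`. -/
def Jmat (v : ℝ × ℝ) : ℝ × ℝ := (v.2, -v.1)

section Helpers

open Real

lemma monoOnIoi {c : ℝ} {E E' : ℝ → ℝ}
    (hE : ∀ x ∈ Ioi c, HasDerivAt E (E' x) x) (h0 : ∀ x ∈ Ioi c, 0 ≤ E' x) :
    MonotoneOn E (Ioi c) := by
  have hc : ContinuousOn E (Ioi c) := fun z hz => (hE z hz).continuousAt.continuousWithinAt
  have hint : interior (Ioi c) = Ioi c := interior_Ioi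
  refine monotoneOn_of_hasDerivWithinAt_nonneg (f' := E') (convex_Ioi c) hc
    (fun z hz => ?_) (fun z hz => ?_)
  · rw [hint] at hz ⊢; exact (hE z hz).hasDerivWithinAt
  · rw [hint] at hz; exact h0 z hz

lemma constOnIoi {c : ℝ} {E E' : ℝ → ℝ}
    (hE : ∀ x ∈ Ioi c, HasDerivAt E (E' x) x) (h0 : ∀ x ∈ Ioi c, E' x = 0)
    {x y : ℝ} (hx : x ∈ Ioi c) (hy : y ∈ Ioi c) : E x = E y := by
  have hmono : MonotoneOn E (Ioi c) := monoOnIoi hE (fun z hz => (h0 z hz).ge)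
  have hanti : MonotoneOn (fun z => -E z) (Ioi c) :=
    monoOnIoi (E' := fun z => -E' z) (fun z hz => (hE z hz).neg)
      (fun z hz => by simp only [h0 z hz]; simp)
  rcases le_total x y with h | h
  · have h1 := hmono hx hy h
    have h2 := hanti hx hy h
    simp only [neg_le_neg_iff] at h2
    linarith
  · have h1 := hmono hy hx h
    have h2 := hanti hy hx h
    simp only [neg_le_neg_iff] at h2
    linarith

lemma shoZero {c t1 ω : ℝ} (hω : ω ≠ 0) {h h1 : ℝ → ℝ}
    (hd : ∀ x ∈ Ioi c, HasDerivAt h (h1 x) x)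
    (hd1 : ∀ x ∈ Ioi c, HasDerivAt h1 (-(ω^2) * h x) x)
    (ht1 : t1 ∈ Ioi c) (e0 : h t1 = 0) (e1 : h1 t1 = 0) :
    ∀ x ∈ Ioi c, h x = 0 := by
  intro x hx
  set E : ℝ → ℝ := fun z => (h1 z)^2 + ω^2 * (h z)^2 with hE
  have hdE : ∀ z ∈ Ioi c, HasDerivAt E 0 z := by
    intro z hz
    have h1' := ((hd1 z hz).pow 2)
    have h2' := (((hd z hz).pow 2).const_mul (ω^2))
    have : HasDerivAt E ((2 * h1 z ^ 1 * (-(ω^2) * h z)) + ω^2 * (2 * h z ^ 1 * h1 z)) z :=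
      h1'.add h2'
    convert this using 1; ring
  have hconst := constOnIoi (E' := fun _ => (0:ℝ)) hdE (fun _ _ => rfl) hx ht1
  have hEt1 : E t1 = 0 := by simp [hE, e0, e1]
  have hEx : (h1 x)^2 + ω^2 * (h x)^2 = 0 := by
    have := hconst.trans hEt1; simpa [hE] using this
  have h2 : ω^2 * (h x)^2 ≤ 0 := by nlinarith [sq_nonneg (h1 x)]
  have : (h x)^2 = 0 := by
    have hω2 : 0 < ω^2 := by positivity
    nlinarith [sq_nonneg (h x)]
  exact pow_eq_zero_iff (n := 2) (by norm_num) |>.mp this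

lemma singleFreqZero {ω t1 C D c : ℝ} (hω : 0 < ω) {f : ℝ → ℝ}
    (H : Tendsto f atTop (𝓝 0))
    (hf : ∀ x ∈ Ioi c, f x = C * cos (ω*(x - t1)) + D * sin (ω*(x - t1))) :
    C = 0 ∧ D = 0 := by
  have pi_pos := Real.pi_pos
  have key : ∀ θ₀ : ℝ, Tendsto (fun n : ℕ => C * cos θ₀ + D * sin θ₀) atTop (𝓝 0) := by
    intro θ₀
    set s : ℕ → ℝ := fun n => t1 + (θ₀ + n * (2*π)) / ω with hs
    have hst : Tendsto s atTop atTop := by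
      apply tendsto_atTop_add_const_left
      apply Tendsto.atTop_div_const hω
      apply tendsto_atTop_add_const_left
      exact Tendsto.atTop_mul_const (by positivity) tendsto_natCast_atTop_atTop
    have hcomp : Tendsto (fun n : ℕ => f (s n)) atTop (𝓝 0) := H.comp hst
    have hev : ∀ᶠ n : ℕ in atTop, f (s n) = C * cos θ₀ + D * sin θ₀ := by
      have : ∀ᶠ n : ℕ in atTop, s n ∈ Ioi c := hst.eventually (eventually_gt_atTop c)
      filter_upwards [this] with n hn
      rw [hf _ hn]
      have hang : ω * (s n - t1) = θ₀ + n * (2*π) := by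
        simp only [hs]
        rw [add_sub_cancel_left, mul_div_cancel₀ _ hω.ne']
      rw [hang, cos_add_nat_mul_two_pi, sin_add_nat_mul_two_pi]
    exact (tendsto_congr' hev).mp hcomp
  constructor
  · have := key 0
    simpa using (tendsto_nhds_unique this tendsto_const_nhds).symm
  · have := key (π/2)
    simpa using (tendsto_nhds_unique this tendsto_const_nhds).symm

lemma twoFreqZero {ω1 ω2 t1 C D A B c : ℝ} (h1 : 0 < ω1) (h12 : ω1 < ω2) {f : ℝ → ℝ}
    (H : Tendsto f atTop (𝓝 0))
    (hf : ∀ x ∈ Ioi c, f x = C * cos (ω1*(x - t1)) + D * sin (ω1*(x - t1))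
        + A * cos (ω2*(x - t1)) + B * sin (ω2*(x - t1))) :
    C = 0 ∧ D = 0 ∧ A = 0 ∧ B = 0 := by
  have pi_pos := Real.pi_pos
  have hω2 : 0 < ω2 := h1.trans h12
  set s : ℝ := 2*π/ω2 with hs
  have hs0 : 0 < s := by positivity
  have hω2s : ω2 * s = 2*π := by rw [hs, mul_div_cancel₀ _ hω2.ne']
  set φ : ℝ := ω1 * s with hφ
  have hφ0 : 0 < φ := by positivity
  have hφ2 : φ < 2*π := by
    rw [hφ, hs, ← mul_div_assoc, div_lt_iff₀ hω2]
    nlinarith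
  have hk : cos φ < 1 := by
    have h2 : 0 < sin (φ/2) := sin_pos_of_pos_of_lt_pi (by positivity) (by linarith)
    have hcm : cos (2 * (φ/2)) = 2 * cos (φ/2)^2 - 1 := Real.cos_two_mul (φ/2)
    have h22 : (2:ℝ) * (φ/2) = φ := by ring
    rw [h22] at hcm
    nlinarith [Real.sin_sq_add_cos_sq (φ/2)]
  set F : ℝ → ℝ := fun x => f x - f (x + s) with hF
  have HF : Tendsto F atTop (𝓝 0) := by
    have h2 : Tendsto (fun x : ℝ => f (x + s)) atTop (𝓝 0) :=
      H.comp (tendsto_atTop_add_const_right atTop s tendsto_id)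
    simpa using H.sub h2
  set C' : ℝ := C * (1 - cos φ) - D * sin φ with hC'
  set D' : ℝ := C * sin φ + D * (1 - cos φ) with hD'
  have hFform : ∀ x ∈ Ioi c, F x = C' * cos (ω1*(x - t1)) + D' * sin (ω1*(x - t1)) := by
    intro x hx
    have hx' : x + s ∈ Ioi c := by have := mem_Ioi.mp hx; rw [mem_Ioi]; linarith
    have e1 : ω1*(x + s - t1) = ω1*(x - t1) + φ := by rw [hφ]; ring
    have e2 : ω2*(x + s - t1) = ω2*(x - t1) + 2*π := by rw [← hω2s]; ring
    have hfx := hf x hx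
    have hfx' := hf _ hx'
    show f x - f (x + s) = C' * cos (ω1*(x - t1)) + D' * sin (ω1*(x - t1))
    rw [hfx, hfx', e1, e2, cos_add, sin_add, cos_add, sin_add,
      Real.cos_two_pi, Real.sin_two_pi, hC', hD']
    ring
  obtain ⟨hC'0, hD'0⟩ := singleFreqZero h1 HF hFform
  have hpos : 0 < (1 - cos φ)^2 + (sin φ)^2 := by nlinarith
  have hC0 : C = 0 := by
    have : C * ((1 - cos φ)^2 + (sin φ)^2) = 0 := by
      linear_combination (1 - cos φ) * hC'0 + sin φ * hD'0
    exact by nlinarith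
  have hD0 : D = 0 := by
    have : D * ((1 - cos φ)^2 + (sin φ)^2) = 0 := by
      linear_combination (1 - cos φ) * hD'0 - sin φ * hC'0
    exact by nlinarith
  refine ⟨hC0, hD0, ?_⟩
  have hf2 : ∀ x ∈ Ioi c, f x = A * cos (ω2*(x - t1)) + B * sin (ω2*(x - t1)) := by
    intro x hx; rw [hf x hx, hC0, hD0]; ring
  exact singleFreqZero hω2 H hf2

lemma hasDerivAt_coss (ω t1 x : ℝ) :
    HasDerivAt (fun y => cos (ω*(y - t1))) (-(ω * sin (ω*(x - t1)))) x := by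
  have hlin : HasDerivAt (fun y : ℝ => ω*(y - t1)) ω x := by
    simpa using ((hasDerivAt_id x).sub_const t1).const_mul ω
  refine ((Real.hasDerivAt_cos (ω*(x - t1))).comp x hlin).congr_deriv ?_
  ring

lemma hasDerivAt_sins (ω t1 x : ℝ) :
    HasDerivAt (fun y => sin (ω*(y - t1))) (ω * cos (ω*(x - t1))) x := by
  have hlin : HasDerivAt (fun y : ℝ => ω*(y - t1)) ω x := by
    simpa using ((hasDerivAt_id x).sub_const t1).const_mul ω
  refine ((Real.hasDerivAt_sin (ω*(x - t1))).comp x hlin).congr_deriv ?_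
  ring

lemma fourthOrderZero {c ω1 ω2 : ℝ} (h1 : 0 < ω1) (h12 : ω1 < ω2)
    {f f1 f2 f3 : ℝ → ℝ}
    (hd0 : ∀ x ∈ Ioi c, HasDerivAt f (f1 x) x)
    (hd1 : ∀ x ∈ Ioi c, HasDerivAt f1 (f2 x) x)
    (hd2 : ∀ x ∈ Ioi c, HasDerivAt f2 (f3 x) x)
    (hd3 : ∀ x ∈ Ioi c, HasDerivAt f3
      (-((ω1^2+ω2^2) * f2 x + ω1^2*ω2^2 * f x)) x)
    (H : Tendsto f atTop (𝓝 0)) :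
    ∀ x ∈ Ioi c, f x = 0 := by
  have hω2 : 0 < ω2 := h1.trans h12
  have hω1ne : ω1 ≠ 0 := ne_of_gt h1
  have hω2ne : ω2 ≠ 0 := ne_of_gt hω2
  set t1 : ℝ := c + 1 with ht1def
  have ht1 : t1 ∈ Ioi c := by simp [ht1def]
  set g : ℝ → ℝ := fun x => f2 x + ω1^2 * f x with hgdef
  set g1 : ℝ → ℝ := fun x => f3 x + ω1^2 * f1 x with hg1def
  have hg : ∀ x ∈ Ioi c, HasDerivAt g (g1 x) x :=
    fun x hx => (hd2 x hx).add ((hd0 x hx).const_mul _)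
  have hg1 : ∀ x ∈ Ioi c, HasDerivAt g1 (-(ω2^2) * g x) x := by
    intro x hx
    have := (hd3 x hx).add ((hd1 x hx).const_mul (ω1^2))
    refine this.congr_deriv ?_
    simp only [hgdef]; ring
  set G : ℝ → ℝ := fun x => g t1 * cos (ω2*(x - t1)) + (g1 t1/ω2) * sin (ω2*(x - t1)) with hGdef
  set G1 : ℝ → ℝ := fun x => -(g t1 * (ω2 * sin (ω2*(x - t1)))) + g1 t1 * cos (ω2*(x - t1)) with hG1def
  have hG : ∀ x, HasDerivAt G (G1 x) x := by
    intro x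
    have h1' := (hasDerivAt_coss ω2 t1 x).const_mul (g t1)
    have h2' := (hasDerivAt_sins ω2 t1 x).const_mul (g1 t1/ω2)
    have := h1'.add h2'
    refine this.congr_deriv ?_
    simp only [hG1def]
    linear_combination (g1 t1 * cos (ω2*(x - t1))) * (inv_mul_cancel₀ hω2ne)
  have hG1 : ∀ x, HasDerivAt G1 (-(ω2^2) * G x) x := by
    intro x
    have h1' := ((hasDerivAt_sins ω2 t1 x).const_mul (g t1 * ω2)).neg
    have h2' := (hasDerivAt_coss ω2 t1 x).const_mul (g1 t1)
    have hh : HasDerivAt G1 (-(g t1 * ω2 * (ω2 * cos (ω2*(x - t1)))) + g1 t1 * -(ω2 * sin (ω2*(x - t1)))) x := by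
      refine HasDerivAt.congr_deriv (h1'.add h2') rfl |>.congr_of_eventuallyEq ?_
      filter_upwards with y
      simp only [hG1def, Pi.add_apply, Pi.neg_apply]; ring
    convert hh using 1
    simp only [hGdef]; field_simp; ring
  have hgG : ∀ x ∈ Ioi c, g x = G x := by
    intro x hx
    have hz := shoZero (h := fun x => g x - G x) (h1 := fun x => g1 x - G1 x) hω2ne
      (fun y hy => (hg y hy).sub (hG y))
      (fun y hy => by
        have := (hg1 y hy).sub (hG1 y)
        refine this.congr_deriv ?_; ring)
      ht1 (by simp [hGdef]) (by simp [hG1def])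
    have h0 : g x - G x = 0 := hz x hx
    linarith
  set d : ℝ := ω1^2 - ω2^2 with hddef
  have hdne : d ≠ 0 := by
    have : ω1^2 < ω2^2 := by nlinarith
    simp only [hddef]; intro hh; nlinarith
  set A0 : ℝ := g t1 / d with hA0
  set B0 : ℝ := g1 t1 / ω2 / d with hB0
  set C0 : ℝ := f t1 - A0 with hC0
  set D0 : ℝ := (f1 t1 - g1 t1 / d)/ω1 with hD0
  set h2 : ℝ → ℝ := fun x => f x - G x / d - (C0 * cos (ω1*(x - t1)) + D0 * sin (ω1*(x - t1))) with hh2def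
  set h21 : ℝ → ℝ := fun x => f1 x - G1 x / d - (-(C0 * (ω1 * sin (ω1*(x - t1)))) + D0 * (ω1 * cos (ω1*(x - t1)))) with hh21def
  have hdh2 : ∀ x ∈ Ioi c, HasDerivAt h2 (h21 x) x := by
    intro x hx
    have hc' := (hasDerivAt_coss ω1 t1 x).const_mul C0
    have hs' := (hasDerivAt_sins ω1 t1 x).const_mul D0
    have hGd := (hG x).div_const d
    have := ((hd0 x hx).sub hGd).sub (hc'.add hs')
    refine this.congr_deriv ?_
    ring
  have hdh21 : ∀ x ∈ Ioi c, HasDerivAt h21 (-(ω1^2) * h2 x) x := by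
    intro x hx
    have hc' := ((hasDerivAt_sins ω1 t1 x).const_mul (C0 * ω1)).neg
    have hs' := (hasDerivAt_coss ω1 t1 x).const_mul (D0 * ω1)
    have hG1d := (hG1 x).div_const d
    have hmain : HasDerivAt h21 (f2 x - (-(ω2^2) * G x)/d - (-(C0 * ω1 * (ω1 * cos (ω1*(x - t1)))) + D0 * ω1 * -(ω1 * sin (ω1*(x - t1))))) x := by
      have := ((hd1 x hx).sub hG1d).sub (hc'.add hs')
      refine this.congr_of_eventuallyEq ?_ |>.congr_deriv ?_
      · filter_upwards with y; simp only [hh21def, Pi.sub_apply, Pi.add_apply, Pi.neg_apply]; ring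
      · ring
    refine hmain.congr_deriv ?_
    have hf2 : f2 x = G x - ω1^2 * f x := by
      have := hgG x hx
      simp only [hgdef] at this
      linarith
    rw [hf2]
    simp only [hh2def]
    linear_combination (-G x) * (mul_inv_cancel₀ hdne) + (G x * d⁻¹) * hddef
  have hz2 : ∀ x ∈ Ioi c, h2 x = 0 := by
    refine shoZero hω1ne hdh2 hdh21 ht1 ?_ ?_
    · simp only [hh2def, hC0, hA0, hGdef]
      simp
    · show f1 t1 - G1 t1 / d - (-(C0 * (ω1 * sin (ω1*(t1 - t1)))) + D0 * (ω1 * cos (ω1*(t1 - t1)))) = 0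
      simp only [hG1def, hD0, sub_self, mul_zero, Real.sin_zero, Real.cos_zero,
        mul_one, neg_zero, zero_add, mul_zero]
      field_simp
      ring
  have hform : ∀ x ∈ Ioi c, f x = C0 * cos (ω1*(x - t1)) + D0 * sin (ω1*(x - t1))
      + A0 * cos (ω2*(x - t1)) + B0 * sin (ω2*(x - t1)) := by
    intro x hx
    have := hz2 x hx
    simp only [hh2def] at this
    have hGx : G x / d = A0 * cos (ω2*(x - t1)) + B0 * sin (ω2*(x - t1)) := by
      simp only [hGdef, hA0, hB0]; ring
    linarith [hGx ▸ this]
  obtain ⟨hC, hD, hA, hB⟩ := twoFreqZero h1 h12 H hform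
  intro x hx
  have := hform x hx
  rw [hC, hD, hA, hB] at this
  simpa using this

lemma enorm2_cont : Continuous fun v : ℝ × ℝ => enorm2 v := by
  unfold enorm2; fun_prop

lemma enorm2_le (v : ℝ × ℝ) : enorm2 v ≤ 2 * ‖v‖ := by
  unfold enorm2
  have h1 : ‖v.1‖ ≤ ‖v‖ := norm_fst_le v
  have h2 : ‖v.2‖ ≤ ‖v‖ := norm_snd_le v
  rw [Real.norm_eq_abs] at h1 h2
  have hn : (0:ℝ) ≤ ‖v‖ := norm_nonneg v
  have e1 : v.1^2 ≤ ‖v‖^2 := by nlinarith [sq_abs v.1, abs_nonneg v.1]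
  have e2 : v.2^2 ≤ ‖v‖^2 := by nlinarith [sq_abs v.2, abs_nonneg v.2]
  calc Real.sqrt (v.1^2+v.2^2) ≤ Real.sqrt ((2*‖v‖)^2) := Real.sqrt_le_sqrt (by nlinarith)
    _ = 2*‖v‖ := Real.sqrt_sq (by positivity)

lemma grad_formula (W : ℝ × ℝ → ℝ) (pp : ℝ × ℝ) (l1 l2 r : ℝ)
    (hWq : ∀ p : ℝ × ℝ, enorm2 (p - pp) < r →
      W p = l1 ^ 2 * (p.1 - pp.1) ^ 2 + l2 ^ 2 * (p.2 - pp.2) ^ 2)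
    (p : ℝ × ℝ) (hp : enorm2 (p - pp) < r) :
    gradW W p = (2*l1^2*(p.1 - pp.1), 2*l2^2*(p.2 - pp.2)) := by
  have hopen : IsOpen {q : ℝ × ℝ | enorm2 (q - pp) < r} := by
    have hcont : Continuous fun q : ℝ × ℝ => enorm2 (q - pp) :=
      enorm2_cont.comp (continuous_id.sub continuous_const)
    exact isOpen_lt hcont continuous_const
  have hev : (fun q => l1^2*((q.1 - pp.1)*(q.1 - pp.1)) + l2^2*((q.2 - pp.2)*(q.2 - pp.2)))
      =ᶠ[𝓝 p] W := by
    filter_upwards [hopen.mem_nhds hp] with q hq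
    rw [hWq q hq]; ring
  have h1 : HasFDerivAt (fun q : ℝ × ℝ => q.1 - pp.1) (ContinuousLinearMap.fst ℝ ℝ ℝ) p :=
    hasFDerivAt_fst.sub_const _
  have h2 : HasFDerivAt (fun q : ℝ × ℝ => q.2 - pp.2) (ContinuousLinearMap.snd ℝ ℝ ℝ) p :=
    hasFDerivAt_snd.sub_const _
  have hQ := (((h1.mul h1).const_mul (l1^2)).add ((h2.mul h2).const_mul (l2^2)))
  have hW := hQ.congr_of_eventuallyEq hev.symm
  have hfd := hW.fderiv
  unfold gradW
  rw [hfd]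
  simp only [ContinuousLinearMap.add_apply, ContinuousLinearMap.smul_apply,
    ContinuousLinearMap.coe_fst', ContinuousLinearMap.coe_snd', smul_eq_mul]
  ext <;> simp <;> ring

lemma fstD {F : ℝ → ℝ × ℝ} {F' : ℝ × ℝ} {x : ℝ} (h : HasDerivAt F F' x) :
    HasDerivAt (fun y => (F y).1) F'.1 x := by
  have := (h.hasFDerivAt.fst).hasDerivAt
  simpa using this

lemma sndD {F : ℝ → ℝ × ℝ} {F' : ℝ × ℝ} {x : ℝ} (h : HasDerivAt F F' x) :
    HasDerivAt (fun y => (F y).2) F'.2 x := by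
  have := (h.hasFDerivAt.snd).hasDerivAt
  simpa using this

end Helpers
set_option maxHeartbeats 1000000 in
/-- Speed limit at an exactly quadratic well: if
`W(p) = λ₁²(p₁−p₊⁽¹⁾)² + λ₂²(p₂−p₊⁽²⁾)²` for `|p − p₊| < r` and `U` is a heteroclinic
traveling wave, i.e. a solution of `-ν J U' = U'' − ∇W(U)` with `U(+∞) = p₊` and
`U(−∞) = p₋ ≠ p₊`, then `ν² ≤ 2(λ₁ + λ₂)²`. -/
theorem quadratic_well_speed_limit (W : ℝ × ℝ → ℝ) (pp pm : ℝ × ℝ) (hne : pm ≠ pp)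
    (l1 l2 r : ℝ) (hl1 : 0 < l1) (hl2 : 0 < l2) (hr : 0 < r)
    (hWq : ∀ p : ℝ × ℝ, enorm2 (p - pp) < r →
      W p = l1 ^ 2 * (p.1 - pp.1) ^ 2 + l2 ^ 2 * (p.2 - pp.2) ^ 2)
    (ν : ℝ) (U U' : ℝ → ℝ × ℝ)
    (hU : ∀ x, HasDerivAt U (U' x) x)
    (hU' : ∀ x, HasDerivAt U' (gradW W (U x) - ν • Jmat (U' x)) x)
    (htop : Tendsto U atTop (𝓝 pp)) (hbot : Tendsto U atBot (𝓝 pm)) :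
    ν ^ 2 ≤ 2 * (l1 + l2) ^ 2 := by
  by_contra hcon
  push_neg at hcon
  -- basic quantities
  set aa : ℝ := 2*l1^2 with haa
  set bb : ℝ := 2*l2^2 with hbb
  have haa0 : 0 < aa := by positivity
  have hbb0 : 0 < bb := by positivity
  set β : ℝ := ν^2 - aa - bb with hβdef
  have hβ4 : 4*l1*l2 < β := by simp only [hβdef, haa, hbb]; nlinarith
  have hβ0 : 0 < β := by nlinarith
  set Dd : ℝ := β^2 - 4*(aa*bb) with hDddef
  have habK : aa*bb = 4*l1^2*l2^2 := by rw [haa, hbb]; ring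
  have hDd0 : 0 < Dd := by
    rw [hDddef, habK]
    have hp : 0 < (β - 4*l1*l2) * (β + 4*l1*l2) :=
      mul_pos (sub_pos.mpr hβ4) (by positivity)
    nlinarith [hp]
  set sD : ℝ := Real.sqrt Dd with hsDdef
  have hsD : sD^2 = Dd := Real.sq_sqrt hDd0.le
  have hsDpos : 0 < sD := Real.sqrt_pos.mpr hDd0
  have hsDltβ : sD < β := by
    have h1 : sD < Real.sqrt (β^2) := Real.sqrt_lt_sqrt hDd0.le (by nlinarith)
    rwa [Real.sqrt_sq hβ0.le] at h1
  set r1 : ℝ := (β - sD)/2 with hr1def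
  set r2 : ℝ := (β + sD)/2 with hr2def
  have hr10 : 0 < r1 := by rw [hr1def]; linarith
  have hr20 : 0 < r2 := by rw [hr2def]; linarith
  have hr12 : r1 < r2 := by rw [hr1def, hr2def]; linarith
  set ω1 : ℝ := Real.sqrt r1 with hω1def
  set ω2 : ℝ := Real.sqrt r2 with hω2def
  have hω1 : 0 < ω1 := Real.sqrt_pos.mpr hr10
  have hω12 : ω1 < ω2 := Real.sqrt_lt_sqrt hr10.le hr12
  have hω1sq : ω1^2 = r1 := Real.sq_sqrt hr10.le
  have hω2sq : ω2^2 = r2 := Real.sq_sqrt hr20.le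
  have hsum : ω1^2 + ω2^2 = ν^2 - aa - bb := by
    rw [hω1sq, hω2sq, hr1def, hr2def, ← hβdef]; ring
  have hprod : ω1^2 * ω2^2 = aa*bb := by
    rw [hω1sq, hω2sq, hr1def, hr2def]
    have h1 : sD^2 = β^2 - 4*(aa*bb) := by rw [hsD, hDddef]
    linear_combination (-1/4 : ℝ) * h1
  -- entering the ball
  obtain ⟨x0, hx0⟩ : ∃ x0 : ℝ, ∀ x ≥ x0, U x ∈ Metric.ball pp (r/2) := by
    have hmem : ∀ᶠ x in atTop, U x ∈ Metric.ball pp (r/2) :=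
      htop.eventually_mem (Metric.ball_mem_nhds pp (half_pos hr))
    exact eventually_atTop.mp hmem
  have hball : ∀ x ∈ Ioi x0, enorm2 (U x - pp) < r := by
    intro x hx
    have h1 := hx0 x (le_of_lt hx)
    rw [Metric.mem_ball, dist_eq_norm] at h1
    calc enorm2 (U x - pp) ≤ 2 * ‖U x - pp‖ := enorm2_le _
      _ < 2 * (r/2) := by linarith
      _ = r := by ring
  -- component functions
  set u1 : ℝ → ℝ := fun x => (U x).1 - pp.1 with hu1def
  set u2 : ℝ → ℝ := fun x => (U x).2 - pp.2 with hu2def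
  set P : ℝ → ℝ := fun x => (U' x).1 with hPdef
  set Q : ℝ → ℝ := fun x => (U' x).2 with hQdef
  have hu1 : ∀ x, HasDerivAt u1 (P x) x := fun x => (fstD (hU x)).sub_const _
  have hu2 : ∀ x, HasDerivAt u2 (Q x) x := fun x => (sndD (hU x)).sub_const _
  have hgrad : ∀ x : ℝ, enorm2 (U x - pp) < r →
      gradW W (U x) = (aa*(u1 x), bb*(u2 x)) := by
    intro x hx
    rw [grad_formula W pp l1 l2 r hWq (U x) hx]
  have hP : ∀ x : ℝ, enorm2 (U x - pp) < r → HasDerivAt P (aa*(u1 x) - ν*(Q x)) x := by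
    intro x hx
    have h1 := fstD (hU' x)
    have h2 : (gradW W (U x) - ν • Jmat (U' x)).1 = aa*(u1 x) - ν*(Q x) := by
      rw [Prod.fst_sub, hgrad x hx]
      simp [Jmat, hQdef]
    rwa [h2] at h1
  have hQ : ∀ x : ℝ, enorm2 (U x - pp) < r → HasDerivAt Q (bb*(u2 x) + ν*(P x)) x := by
    intro x hx
    have h1 := sndD (hU' x)
    have h2 : (gradW W (U x) - ν • Jmat (U' x)).2 = bb*(u2 x) + ν*(P x) := by
      rw [Prod.snd_sub, hgrad x hx]
      simp [Jmat, hPdef]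
    rwa [h2] at h1
  -- limits
  have htop1 : Tendsto u1 atTop (𝓝 0) := by
    have h1 : Tendsto (fun x => (U x).1) atTop (𝓝 pp.1) :=
      (continuous_fst.tendsto pp).comp htop
    simpa using h1.sub_const pp.1
  have htop2 : Tendsto u2 atTop (𝓝 0) := by
    have h1 : Tendsto (fun x => (U x).2) atTop (𝓝 pp.2) :=
      (continuous_snd.tendsto pp).comp htop
    simpa using h1.sub_const pp.2
  -- fourth-order ODE on a ray after entering the ball
  have hu1zero : ∀ x ∈ Ioi x0, u1 x = 0 := by
    refine fourthOrderZero (f1 := P) (f2 := fun x => aa*(u1 x) - ν*(Q x))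
      (f3 := fun x => (aa - ν^2)*(P x) - (ν*bb)*(u2 x)) hω1 hω12
      (fun x hx => hu1 x) (fun x hx => hP x (hball x hx)) ?_ ?_ htop1
    · intro x hx
      have := ((hu1 x).const_mul aa).sub ((hQ x (hball x hx)).const_mul ν)
      exact this.congr_deriv (by ring)
    · intro x hx
      have := ((hP x (hball x hx)).const_mul (aa - ν^2)).sub ((hu2 x).const_mul (ν*bb))
      refine this.congr_deriv ?_
      rw [hsum, hprod]
      ring
  have hu2zero : ∀ x ∈ Ioi x0, u2 x = 0 := by
    refine fourthOrderZero (f1 := Q) (f2 := fun x => bb*(u2 x) + ν*(P x))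
      (f3 := fun x => (ν*aa)*(u1 x) + (bb - ν^2)*(Q x)) hω1 hω12
      (fun x hx => hu2 x) (fun x hx => hQ x (hball x hx)) ?_ ?_ htop2
    · intro x hx
      have := ((hu2 x).const_mul bb).add ((hP x (hball x hx)).const_mul ν)
      exact this.congr_deriv (by ring)
    · intro x hx
      have := ((hu1 x).const_mul (ν*aa)).add ((hQ x (hball x hx)).const_mul (bb - ν^2))
      refine this.congr_deriv ?_
      rw [hsum, hprod]
      ring
  have hUpp : ∀ x ∈ Ioi x0, U x = pp := by
    intro x hx
    have h1 := hu1zero x hx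
    have h2 := hu2zero x hx
    simp only [hu1def, hu2def, sub_eq_zero] at h1 h2
    exact Prod.ext h1 h2
  have hU'0 : ∀ x ∈ Ioi x0, U' x = 0 := by
    intro x hx
    have hev : (fun _ : ℝ => pp) =ᶠ[𝓝 x] U := by
      filter_upwards [isOpen_Ioi.mem_nhds hx] with y hy using (hUpp y hy).symm
    have h1 : HasDerivAt (fun _ : ℝ => pp) (U' x) x := (hU x).congr_of_eventuallyEq hev
    exact ((hasDerivAt_const x pp).unique h1).symm
  -- backward propagation
  have hUcont : Continuous U := by
    have : Differentiable ℝ U := fun x => (hU x).differentiableAt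
    exact this.continuous
  have hU'cont : Continuous U' := by
    have : Differentiable ℝ U' := fun x => (hU' x).differentiableAt
    exact this.continuous
  set S : Set ℝ := {x : ℝ | ∀ y, x ≤ y → U y = pp ∧ U' y = 0} with hSdef
  have hS1 : (x0+1) ∈ S := by
    intro y hy
    have hy' : y ∈ Ioi x0 := by simp only [mem_Ioi]; linarith
    exact ⟨hUpp y hy', hU'0 y hy'⟩
  have hSuniv : ∀ z : ℝ, z ∈ S := by
    intro z
    by_contra hz
    have hlb : z ∈ lowerBounds S := by
      intro x hxS
      by_contra hxz
      push_neg at hxz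
      exact hz (fun y hy => hxS y (le_trans hxz.le hy))
    have Sne : S.Nonempty := ⟨x0+1, hS1⟩
    have hbdd : BddBelow S := ⟨z, hlb⟩
    set m : ℝ := sInf S with hmdef
    have hma : ∀ y, m < y → U y = pp ∧ U' y = 0 := by
      intro y hy
      obtain ⟨x, hxS, hxy⟩ : ∃ x ∈ S, x < y := by
        by_contra h
        push_neg at h
        have : y ≤ m := le_csInf Sne h
        linarith
      exact hxS y hxy.le
    have hUm : U m = pp := by
      have hsub : Ioi m ⊆ {x | U x = pp} := fun y hy => (hma y hy).1
      have hmem : m ∈ closure (Ioi m) := by rw [closure_Ioi]; exact self_mem_Ici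
      have := closure_mono hsub hmem
      exact (isClosed_eq hUcont continuous_const).closure_subset this
    have hU'm : U' m = 0 := by
      have hsub : Ioi m ⊆ {x | U' x = 0} := fun y hy => (hma y hy).2
      have hmem : m ∈ closure (Ioi m) := by rw [closure_Ioi]; exact self_mem_Ici
      have := closure_mono hsub hmem
      exact (isClosed_eq hU'cont continuous_const).closure_subset this
    -- find a ball interval to the left of m
    obtain ⟨δ, hδ0, hδ⟩ : ∃ δ > 0, ∀ x : ℝ, dist x m < δ → enorm2 (U x - pp) < r := by
      have hcontm : ContinuousAt (fun x => enorm2 (U x - pp)) m :=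
        (enorm2_cont.comp ((hUcont.sub continuous_const))).continuousAt
      have hvalue : enorm2 (U m - pp) < r := by
        rw [hUm, sub_self]
        unfold enorm2
        norm_num
        exact hr
      have hev : ∀ᶠ x in 𝓝 m, enorm2 (U x - pp) < r :=
        hcontm.eventually_lt continuousAt_const hvalue
      exact Metric.eventually_nhds_iff_ball.mp hev |>.imp
        (fun δ ⟨hδ0, hδ⟩ => ⟨hδ0, fun x hx => hδ x (by rwa [Metric.mem_ball] at *)⟩)
    have hball2 : ∀ x ∈ Ioi (m - δ), enorm2 (U x - pp) < r := by
      intro x hx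
      rcases lt_or_ge x (m + δ) with h | h
      · apply hδ
        rw [Real.dist_eq, abs_lt]
        constructor <;> [linarith [mem_Ioi.mp hx]; linarith [mem_Ioi.mp hx]]
      · have : U x = pp := (hma x (by linarith)).1
        rw [this]
        simpa [enorm2] using hr
    -- energy decay backward
    set Cc : ℝ := 2 + aa + bb with hCcdef
    set φ : ℝ → ℝ := fun x => (u1 x)^2 + (u2 x)^2 + (P x)^2 + (Q x)^2 with hφdef
    set ψ : ℝ → ℝ := fun x => φ x * Real.exp (Cc*x) with hψdef
    have hψmono : MonotoneOn ψ (Ioi (m - δ)) := by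
      refine monoOnIoi (E' := fun x =>
        ((2*(1+aa)*(u1 x)*(P x) + 2*(1+bb)*(u2 x)*(Q x)) + Cc * φ x) * Real.exp (Cc*x))
        ?_ ?_
      · intro x hx
        have hbx := hball2 x hx
        have hφd : HasDerivAt φ (2*(1+aa)*(u1 x)*(P x) + 2*(1+bb)*(u2 x)*(Q x)) x := by
          have h1 := (hu1 x).pow 2
          have h2 := (hu2 x).pow 2
          have h3 := (hP x hbx).pow 2
          have h4 := (hQ x hbx).pow 2
          have := ((h1.add h2).add h3).add h4
          refine this.congr_deriv ?_
          ring
        have hlin : HasDerivAt (fun y : ℝ => Cc*y) Cc x := by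
          simpa using (hasDerivAt_id x).const_mul Cc
        have hexp := hlin.exp
        have := hφd.mul hexp
        refine this.congr_deriv ?_
        ring
      · intro x hx
        apply mul_nonneg _ (Real.exp_nonneg _)
        have hkey : (2*(1+aa)*(u1 x)*(P x) + 2*(1+bb)*(u2 x)*(Q x)) + Cc * φ x
            = (1+aa)*(u1 x + P x)^2 + (1+bb)*(u2 x + Q x)^2
              + (1+bb)*(u1 x)^2 + (1+bb)*(P x)^2 + (1+aa)*(u2 x)^2 + (1+aa)*(Q x)^2 := by
          simp only [hφdef, hCcdef]; ring
        rw [hkey]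
        have c1 : (0:ℝ) ≤ 1+aa := by linarith
        have c2 : (0:ℝ) ≤ 1+bb := by linarith
        have t1 := mul_nonneg c1 (sq_nonneg (u1 x + P x))
        have t2 := mul_nonneg c2 (sq_nonneg (u2 x + Q x))
        have t3 := mul_nonneg c2 (sq_nonneg (u1 x))
        have t4 := mul_nonneg c2 (sq_nonneg (P x))
        have t5 := mul_nonneg c1 (sq_nonneg (u2 x))
        have t6 := mul_nonneg c1 (sq_nonneg (Q x))
        linarith
    have hφm : φ m = 0 := by
      simp only [hφdef, hu1def, hu2def, hPdef, hQdef, hUm, hU'm]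
      simp
    have hw : (m - δ/2) ∈ S := by
      intro y hy
      rcases lt_or_ge m y with h | h
      · exact hma y h
      · -- m - δ/2 ≤ y ≤ m
        have hy1 : y ∈ Ioi (m - δ) := by simp only [mem_Ioi]; linarith
        have hm1 : m ∈ Ioi (m - δ) := by simp only [mem_Ioi]; linarith
        have hle := hψmono hy1 hm1 h
        have hψm : ψ m = 0 := by simp [hψdef, hφm]
        have hφy0 : 0 ≤ φ y := by positivity
        have hψy0 : 0 ≤ ψ y := mul_nonneg hφy0 (Real.exp_nonneg _)
        have hψy : ψ y = 0 := le_antisymm (hψm ▸ hle) hψy0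
        have hφy : φ y = 0 := by
          have hexp : 0 < Real.exp (Cc*y) := Real.exp_pos _
          simp only [hψdef] at hψy
          exact (mul_eq_zero.mp hψy).resolve_right (ne_of_gt hexp)
        simp only [hφdef] at hφy
        have s1 := sq_nonneg (u1 y)
        have s2 := sq_nonneg (u2 y)
        have s3 := sq_nonneg (P y)
        have s4 := sq_nonneg (Q y)
        have e1 : u1 y = 0 :=
          pow_eq_zero_iff (n := 2) (by norm_num) |>.mp (by linarith)
        have e2 : u2 y = 0 :=
          pow_eq_zero_iff (n := 2) (by norm_num) |>.mp (by linarith)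
        have e3 : P y = 0 :=
          pow_eq_zero_iff (n := 2) (by norm_num) |>.mp (by linarith)
        have e4 : Q y = 0 :=
          pow_eq_zero_iff (n := 2) (by norm_num) |>.mp (by linarith)
        simp only [hu1def, sub_eq_zero] at e1
        simp only [hu2def, sub_eq_zero] at e2
        constructor
        · exact Prod.ext e1 e2
        · exact Prod.ext e3 e4
    have : m ≤ m - δ/2 := csInf_le hbdd hw
    linarith
  -- conclusion: U is constant pp, contradicting the limit at -∞
  have hUconst : U = fun _ => pp := funext fun z => (hSuniv z z le_rfl).1
  have : Tendsto U atBot (𝓝 pp) := by rw [hUconst]; exact tendsto_const_nhds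
  exact hne (tendsto_nhds_unique hbot this)
end
end

section
/- Suppose λ > 0 and that W(p) = λ|p − p₊|² + G(|p − p₊|²) for all |p − p₊| < r, where G : ℝ → ℝ is differentiable with G(t) = o(t) and G'(t) = o(1) as t → 0⁺. If U : ℝ → ℝ² solves the traveling wave equation −ν J U' = U'' − ∇W(U) on an interval [x₀, ∞), stays in the ball B_r(p₊) there, and satisfies U(x) → p₊ and U'(x) → 0 as x → +∞, then ν² ≤ 8λ; i.e., no heteroclinic traveling wave approaching such a Schrödinger-type well exists with ν² > 8λ. -/
open Set Filter MeasureTheory Asymptotics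
open scoped Topology

set_option maxHeartbeats 1000000

noncomputable section

private lemma hfst' {f : ℝ → ℝ × ℝ} {f' : ℝ × ℝ} {x : ℝ} (h : HasDerivAt f f' x) :
    HasDerivAt (fun y => (f y).1) f'.1 x := (hasFDerivAt_fst (p := f x)).comp_hasDerivAt x h

private lemma hsnd' {f : ℝ → ℝ × ℝ} {f' : ℝ × ℝ} {x : ℝ} (h : HasDerivAt f f' x) :
    HasDerivAt (fun y => (f y).2) f'.2 x := (hasFDerivAt_snd (p := f x)).comp_hasDerivAt x h

private lemma final_alg (lam ν a b p q gn : ℝ)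
    (hlt : 8 * lam < ν ^ 2)
    (hnpos : 0 < a ^ 2 + b ^ 2)
    (hEx : p ^ 2 / 2 + q ^ 2 / 2 - lam * (a ^ 2 + b ^ 2) - gn = 0)
    (hAx : a * q - b * p - ν / 2 * (a ^ 2 + b ^ 2) = 0)
    (hGle : gn ≤ (ν ^ 2 / 8 - lam) / 2 * (a ^ 2 + b ^ 2)) : False := by
  have hpq : p ^ 2 + q ^ 2 = 2 * lam * (a ^ 2 + b ^ 2) + 2 * gn := by
    linear_combination 2 * hEx
  have hang : a * q - b * p = ν / 2 * (a ^ 2 + b ^ 2) := by linear_combination hAx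
  have key : (a * p + b * q) ^ 2 + (a * q - b * p) ^ 2
      = (a ^ 2 + b ^ 2) * (p ^ 2 + q ^ 2) := by ring
  have hpqN : (a ^ 2 + b ^ 2) * (p ^ 2 + q ^ 2)
      = 2 * lam * ((a ^ 2 + b ^ 2) * (a ^ 2 + b ^ 2)) + 2 * ((a ^ 2 + b ^ 2) * gn) := by
    rw [hpq]; ring
  have hangsq : (a * q - b * p) ^ 2 = ν ^ 2 / 4 * ((a ^ 2 + b ^ 2) * (a ^ 2 + b ^ 2)) := by
    rw [hang]; ring
  have hGle2 : (a ^ 2 + b ^ 2) * gn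
      ≤ (ν ^ 2 / 8 - lam) / 2 * ((a ^ 2 + b ^ 2) * (a ^ 2 + b ^ 2)) := by
    have h2 := mul_le_mul_of_nonneg_left hGle hnpos.le
    have heq : (a ^ 2 + b ^ 2) * ((ν ^ 2 / 8 - lam) / 2 * (a ^ 2 + b ^ 2))
        = (ν ^ 2 / 8 - lam) / 2 * ((a ^ 2 + b ^ 2) * (a ^ 2 + b ^ 2)) := by ring
    exact heq ▸ h2
  have hprod : (0:ℝ) < (ν ^ 2 - 8 * lam) * ((a ^ 2 + b ^ 2) * (a ^ 2 + b ^ 2)) :=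
    mul_pos (by nlinarith) (mul_pos hnpos hnpos)
  linarith [sq_nonneg (a * p + b * q), key, hpqN, hangsq, hGle2, hprod]

private lemma const_ray (f : ℝ → ℝ) (x0 : ℝ) (h : ∀ x, x0 ≤ x → HasDerivAt f 0 x) :
    ∀ y, x0 ≤ y → f y = f x0 := by
  intro y hy
  exact constant_of_has_deriv_right_zero
    (fun z hz => (h z hz.1).continuousAt.continuousWithinAt)
    (fun z hz => (h z hz.1).hasDerivWithinAt) y ⟨hy, le_rfl⟩

/-- Speed limit at a Schrödinger-type (radial) well: suppose
`W(p) = λ|p−p₊|² + G(|p−p₊|²)` for `|p−p₊| < r` with `G` differentiable, `G(t) = o(t)`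
and `G'(t) = o(1)` as `t → 0⁺`. If `U` solves the traveling wave equation
`-ν J U' = U'' − ∇W(U)` on `[x₀,∞)` (where `∇W(p) = (2λ + 2G'(|p−p₊|²))(p−p₊)`),
stays in the ball `B_r(p₊)` there without touching `p₊`, and `U(x) → p₊`, `U'(x) → 0`
as `x → +∞`, then `ν² ≤ 8λ`. -/
theorem schrodinger_well_speed_limit (lam r ν x0 : ℝ) (hlam : 0 < lam) (hr : 0 < r)
    (pp : ℝ × ℝ) (G G' : ℝ → ℝ)
    (hG : ∀ t : ℝ, HasDerivAt G (G' t) t)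
    (hGo : (fun t => G t) =o[nhdsWithin 0 (Set.Ioi 0)] fun t : ℝ => t)
    (hG'o : (fun t => G' t) =o[nhdsWithin 0 (Set.Ioi 0)] fun _ : ℝ => (1:ℝ))
    (U U' : ℝ → ℝ × ℝ)
    (hball : ∀ x : ℝ, x0 ≤ x → enorm2 (U x - pp) < r)
    (hne : ∀ x : ℝ, x0 ≤ x → U x ≠ pp)
    (hU : ∀ x : ℝ, x0 ≤ x → HasDerivAt U (U' x) x)
    (hU' : ∀ x : ℝ, x0 ≤ x → HasDerivAt U'
        ((2 * lam + 2 * G' (enorm2 (U x - pp) ^ 2)) • (U x - pp) - ν • Jmat (U' x)) x)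
    (htop : Tendsto U atTop (𝓝 pp))
    (hdtop : Tendsto U' atTop (𝓝 0)) :
    ν ^ 2 ≤ 8 * lam := by
  by_contra hlt
  push_neg at hlt
  -- notation
  set n : ℝ → ℝ := fun x => ((U x).1 - pp.1) ^ 2 + ((U x).2 - pp.2) ^ 2 with hn_def
  have henn : ∀ x : ℝ, enorm2 (U x - pp) ^ 2 = n x := by
    intro x
    have : (0:ℝ) ≤ ((U x).1 - pp.1) ^ 2 + ((U x).2 - pp.2) ^ 2 := by positivity
    simp [enorm2, Prod.fst_sub, Prod.snd_sub, Real.sq_sqrt this, hn_def]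
  -- component derivatives
  have ha : ∀ x, x0 ≤ x → HasDerivAt (fun y => (U y).1 - pp.1) ((U' x).1) x :=
    fun x hx => (hfst' (hU x hx)).sub_const _
  have hb : ∀ x, x0 ≤ x → HasDerivAt (fun y => (U y).2 - pp.2) ((U' x).2) x :=
    fun x hx => (hsnd' (hU x hx)).sub_const _
  have hn' : ∀ x, x0 ≤ x → HasDerivAt n
      (2 * ((U x).1 - pp.1) * (U' x).1 + 2 * ((U x).2 - pp.2) * (U' x).2) x := by
    intro x hx
    have h1 := ((ha x hx).pow 2).add ((hb x hx).pow 2)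
    refine h1.congr_deriv ?_
    ring
  have hc1 : ∀ x, x0 ≤ x → HasDerivAt (fun y => (U' y).1)
      ((2 * lam + 2 * G' (n x)) * ((U x).1 - pp.1) - ν * (U' x).2) x := by
    intro x hx
    have h1 := hfst' (hU' x hx)
    rw [henn x] at h1
    simpa [Jmat, Prod.fst_sub, Prod.smul_fst] using h1
  have hc2 : ∀ x, x0 ≤ x → HasDerivAt (fun y => (U' y).2)
      ((2 * lam + 2 * G' (n x)) * ((U x).2 - pp.2) + ν * (U' x).1) x := by
    intro x hx
    have h1 := hsnd' (hU' x hx)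
    rw [henn x] at h1
    have h2 : ((2 * lam + 2 * G' (n x)) • (U x - pp) - ν • Jmat (U' x)).2
        = (2 * lam + 2 * G' (n x)) * ((U x).2 - pp.2) + ν * (U' x).1 := by
      simp only [Prod.snd_sub, Prod.smul_snd, Jmat, smul_eq_mul]
      ring
    rwa [h2] at h1
  -- conserved quantities
  set E : ℝ → ℝ := fun x => (U' x).1 ^ 2 / 2 + (U' x).2 ^ 2 / 2 - lam * n x - G (n x)
    with hE_def
  set A : ℝ → ℝ := fun x =>
    ((U x).1 - pp.1) * (U' x).2 - ((U x).2 - pp.2) * (U' x).1 - ν / 2 * n x with hA_def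
  have hE' : ∀ x, x0 ≤ x → HasDerivAt E 0 x := by
    intro x hx
    have h1 := ((((hc1 x hx).pow 2).div_const 2).add (((hc2 x hx).pow 2).div_const 2)).sub
      (((hn' x hx).const_mul lam).add ((hG (n x)).comp x (hn' x hx)))
    refine (h1.congr_deriv ?_).congr_of_eventuallyEq (Eventually.of_forall fun y => ?_)
    · push_cast
      ring
    · simp [hE_def]
      ring
  have hA' : ∀ x, x0 ≤ x → HasDerivAt A 0 x := by
    intro x hx
    have h1 := (((ha x hx).mul (hc2 x hx)).sub ((hb x hx).mul (hc1 x hx))).sub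
      ((hn' x hx).const_mul (ν / 2))
    refine h1.congr_deriv ?_
    ring
  -- limits of ingredients
  have hU1 : Tendsto (fun x => (U x).1 - pp.1) atTop (𝓝 0) := by
    have h1 : Tendsto (fun x => (U x).1) atTop (𝓝 pp.1) := (continuous_fst.tendsto pp).comp htop
    have h2 : Tendsto (fun _ : ℝ => pp.1) atTop (𝓝 pp.1) := tendsto_const_nhds
    simpa using h1.sub h2
  have hU2 : Tendsto (fun x => (U x).2 - pp.2) atTop (𝓝 0) := by
    have h1 : Tendsto (fun x => (U x).2) atTop (𝓝 pp.2) := (continuous_snd.tendsto pp).comp htop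
    have h2 : Tendsto (fun _ : ℝ => pp.2) atTop (𝓝 pp.2) := tendsto_const_nhds
    simpa using h1.sub h2
  have hV1 : Tendsto (fun x => (U' x).1) atTop (𝓝 0) := by
    simpa [Function.comp_def] using (continuous_fst.tendsto (0 : ℝ × ℝ)).comp hdtop
  have hV2 : Tendsto (fun x => (U' x).2) atTop (𝓝 0) := by
    simpa [Function.comp_def] using (continuous_snd.tendsto (0 : ℝ × ℝ)).comp hdtop
  have hn0 : Tendsto n atTop (𝓝 0) := by
    have := (hU1.pow 2).add (hU2.pow 2)
    simpa using this
  have hG00 : G 0 = 0 := by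
    have h1 : Tendsto G (𝓝[>] (0:ℝ)) (𝓝 0) :=
      hGo.isBigO.trans_tendsto (tendsto_id.mono_left nhdsWithin_le_nhds)
    have h2 : Tendsto G (𝓝[>] (0:ℝ)) (𝓝 (G 0)) :=
      (hG 0).continuousAt.tendsto.mono_left nhdsWithin_le_nhds
    exact tendsto_nhds_unique h2 h1
  have hGn : Tendsto (fun x => G (n x)) atTop (𝓝 0) := by
    have := (hG 0).continuousAt.tendsto.comp hn0
    rwa [hG00] at this
  have hEtop : Tendsto E atTop (𝓝 0) := by
    have := ((((hV1.pow 2).div_const 2).add ((hV2.pow 2).div_const 2)).sub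
      (hn0.const_mul lam)).sub hGn
    simpa using this
  have hAtop : Tendsto A atTop (𝓝 0) := by
    have := ((hU1.mul hV2).sub (hU2.mul hV1)).sub (hn0.const_mul (ν / 2))
    simpa using this
  -- constancy + limit ⇒ E ≡ 0, A ≡ 0 on the ray
  have hEzero : ∀ x, x0 ≤ x → E x = 0 := by
    have hc := const_ray E x0 hE'
    have : Tendsto E atTop (𝓝 (E x0)) := by
      refine Tendsto.congr' ?_ tendsto_const_nhds
      filter_upwards [eventually_ge_atTop x0] with y hy using (hc y hy).symm
    have h0 : E x0 = 0 := tendsto_nhds_unique this hEtop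
    intro x hx; rw [hc x hx, h0]
  have hAzero : ∀ x, x0 ≤ x → A x = 0 := by
    have hc := const_ray A x0 hA'
    have : Tendsto A atTop (𝓝 (A x0)) := by
      refine Tendsto.congr' ?_ tendsto_const_nhds
      filter_upwards [eventually_ge_atTop x0] with y hy using (hc y hy).symm
    have h0 : A x0 = 0 := tendsto_nhds_unique this hAtop
    intro x hx; rw [hc x hx, h0]
  -- smallness of G
  have hcpos : (0:ℝ) < ν ^ 2 / 8 - lam := by nlinarith
  have hev : ∀ᶠ t in 𝓝[>] (0:ℝ), |G t| ≤ (ν ^ 2 / 8 - lam) / 2 * |t| := by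
    have := hGo.def (by positivity : (0:ℝ) < (ν ^ 2 / 8 - lam) / 2)
    simpa [Real.norm_eq_abs] using this
  rw [eventually_nhdsWithin_iff] at hev
  rw [Metric.eventually_nhds_iff] at hev
  obtain ⟨δ, hδ, hδS⟩ := hev
  -- find a point with 0 < n x < δ
  have hevx : ∀ᶠ x in atTop, n x < δ ∧ x0 ≤ x := by
    filter_upwards [hn0.eventually (gt_mem_nhds hδ), eventually_ge_atTop x0] with x h1 h2
    exact ⟨h1, h2⟩
  obtain ⟨x, hxδ, hxx0⟩ := hevx.exists
  have hnpos : 0 < n x := by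
    have hne' := hne x hxx0
    have hco : (U x).1 - pp.1 ≠ 0 ∨ (U x).2 - pp.2 ≠ 0 := by
      by_contra h
      push_neg at h
      exact hne' (Prod.ext (by linarith [h.1]) (by linarith [h.2]))
    show (0:ℝ) < ((U x).1 - pp.1) ^ 2 + ((U x).2 - pp.2) ^ 2
    rcases hco with h | h
    · have h1 : 0 < ((U x).1 - pp.1) ^ 2 := by positivity
      linarith [sq_nonneg ((U x).2 - pp.2)]
    · have h1 : 0 < ((U x).2 - pp.2) ^ 2 := by positivity
      linarith [sq_nonneg ((U x).1 - pp.1)]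
  have hGsm : |G (n x)| ≤ (ν ^ 2 / 8 - lam) / 2 * |n x| := by
    apply hδS
    · rw [Real.dist_eq, sub_zero, abs_of_pos hnpos]
      exact hxδ
    · exact hnpos
  have hGle : G (n x) ≤ (ν ^ 2 / 8 - lam) / 2 * n x := by
    have := (abs_le.mp hGsm).2
    rwa [abs_of_pos hnpos] at this
  -- final algebra
  have hEx := hEzero x hxx0
  have hAx := hAzero x hxx0
  simp only [hE_def, hA_def] at hEx hAx
  set a := (U x).1 - pp.1
  set b := (U x).2 - pp.2
  set p := (U' x).1
  set q := (U' x).2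
  have hnx : n x = a ^ 2 + b ^ 2 := rfl
  rw [hnx] at hEx hAx hGle hnpos
  exact final_alg lam ν a b p q (G (a ^ 2 + b ^ 2)) hlt hnpos hEx hAx hGle
end
end
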